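/- Let k ≥ 4 and let n satisfy Φ_k ≤ n ≤ Φ_{k+1} − 1. Let SB[n] denote the length of the longest short border of the prefix F_∞[1..n]. Then: SB[n] = Φ_{k-2} + j if n = Φ_k + j with 0 ≤ j < Φ_{k-3}; SB[n] = Φ_{k-3} + j if n = Φ_k + Φ_{k-3} + j with 0 ≤ j < Φ_{k-4}; and SB[n] = Φ_{k-2} + j if n = Φ_k + Φ_{k-2} + j with 0 ≤ j < Φ_{k-3}. -/

import Mathlib

open List Filter

/-- The Zimin pattern `Z_k` as a word over variables `0, 1, ..., k-1`
(`Z_0` is empty, `Z_{k+1} = Z_k · x_{k+1} · Z_k`). -/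
def ziminWord : ℕ → List ℕ
  | 0 => []
  | k + 1 => ziminWord k ++ k :: ziminWord k

/-- `w` is the image of the Zimin pattern `Z_k` under a non-erasing morphism. -/
def IsZiminImage {α : Type*} (k : ℕ) (w : List α) : Prop :=
  ∃ h : ℕ → List α, (∀ i, h i ≠ []) ∧ w = (ziminWord k).flatMap h

/-- The Zimin type of `w`: the maximum `k` such that `w` is an image of `Z_k`
under a non-erasing morphism (0 for the empty word). -/
noncomputable def ziminType {α : Type*} (w : List α) : ℕ :=
  sSup {k | IsZiminImage k w}

/-- The Zimin pattern `Z_k` embeds in `w`: some factor of `w` is an image of `Z_k`. -/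
def ziminEmbeds {α : Type*} (k : ℕ) (w : List α) : Prop :=
  ∃ u : List α, u <:+: w ∧ IsZiminImage k u

/-- Length of the longest border (proper prefix that is also a proper suffix) of `w`. -/
noncomputable def bordLen {α : Type*} (w : List α) : ℕ :=
  sSup {j | w.take j <:+ w ∧ j < w.length}

/-- Length of the longest short border (border of length `< |w|/2`) of `w`. -/
noncomputable def shortBordLen {α : Type*} (w : List α) : ℕ :=
  sSup {j | w.take j <:+ w ∧ 2 * j < w.length}

/-- The longest border of `w`. -/
noncomputable def bord {α : Type*} (w : List α) : List α := w.take (bordLen w)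

/-- The longest short border of `w`. -/
noncomputable def shortBord {α : Type*} (w : List α) : List α := w.take (shortBordLen w)

/-- The Fibonacci words over `Bool` (`a = false`, `b = true`), with
`fibWord 0 = F_0 = a`, `fibWord 1 = F_1 = F_0 F_{-1} = ab`, `F_{n} = F_{n-1} F_{n-2}`. -/
def fibWord : ℕ → List Bool
  | 0 => [false]
  | 1 => [false, true]
  | n + 2 => fibWord (n + 1) ++ fibWord n

/-- The Fibonacci numbers `Φ_n = |F_n|` (`Φ_0 = 1, Φ_1 = 2, Φ_2 = 3, ...`). -/
def Phi (n : ℕ) : ℕ := (fibWord n).length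

/-- The infinite Fibonacci word `F_∞` (0-indexed letters). -/
def fibInf (i : ℕ) : Bool := (fibWord (i + 2)).getD i false

/-- The prefix `F_∞[1..n]` of the infinite Fibonacci word. -/
def fibPrefix (n : ℕ) : List Bool := (List.range n).map fibInf



lemma phi_add (n : ℕ) : Phi (n+2) = Phi (n+1) + Phi n := by
  simp [Phi, fibWord]

lemma succ_le_phi (n : ℕ) : n + 1 ≤ Phi n := by
  induction n using Nat.strong_induction_on with
  | _ n ih =>
    match n with
    | 0 => simp [Phi, fibWord]
    | 1 => simp [Phi, fibWord]
    | n + 2 =>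
      have h1 := ih (n+1) (by omega)
      have h2 := ih n (by omega)
      rw [phi_add]; omega

lemma phi_mono : Monotone Phi := by
  have h : ∀ n, Phi n ≤ Phi (n+1) := by
    intro n
    match n with
    | 0 => simp [Phi, fibWord]
    | n + 1 => rw [phi_add]; omega
  exact monotone_nat_of_le_succ h

lemma fibWord_prefix_succ (n : ℕ) : fibWord n <+: fibWord (n+1) := by
  match n with
  | 0 => exact ⟨[true], rfl⟩
  | n + 1 => exact ⟨fibWord n, rfl⟩

lemma fibWord_prefix {a b : ℕ} (h : a ≤ b) : fibWord a <+: fibWord b := by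
  induction b with
  | zero => simp_all
  | succ b ih =>
    rcases Nat.lt_or_ge a (b+1) with h'|h'
    · exact (ih (by omega)).trans (fibWord_prefix_succ b)
    · have : a = b + 1 := by omega
      subst this; rfl

lemma getD_prefix {l₁ l₂ : List Bool} (h : l₁ <+: l₂) {i : ℕ} (hi : i < l₁.length) :
    l₂.getD i false = l₁.getD i false := by
  obtain ⟨t, rfl⟩ := h
  rw [List.getD_eq_getElem?_getD, List.getD_eq_getElem?_getD,
    List.getElem?_append_left hi]

lemma fibInf_eq_getD {K i : ℕ} (hi : i < Phi K) : fibInf i = (fibWord K).getD i false := by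
  unfold fibInf
  rcases Nat.le_total K (i+2) with h|h
  · exact getD_prefix (fibWord_prefix h) hi
  · have h3 : i < (fibWord (i+2)).length := by
      have := succ_le_phi (i+2); unfold Phi at this; omega
    exact (getD_prefix (fibWord_prefix h) h3).symm

lemma fibInf_getElem {K i : ℕ} (hi : i < (fibWord K).length) : (fibWord K)[i] = fibInf i := by
  rw [fibInf_eq_getD (hi : i < Phi K), List.getD_eq_getElem?_getD, List.getElem?_eq_getElem hi]
  rfl

/-- shift by Phi (m+1) agrees on first Phi m letters -/
lemma shiftQ {m r : ℕ} (hr : r < Phi m) : fibInf (Phi (m+1) + r) = fibInf r := by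
  have h1 : Phi (m+1) + r < Phi (m+2) := by rw [phi_add]; omega
  rw [fibInf_eq_getD h1, fibInf_eq_getD hr]
  show (fibWord (m+1) ++ fibWord m).getD (Phi (m+1) + r) false = _
  rw [List.getD_eq_getElem?_getD, List.getD_eq_getElem?_getD,
    List.getElem?_append_right (by exact Nat.le_add_right _ _)]
  congr 2
  show Phi (m+1) + r - Phi (m+1) = r
  omega

lemma mismatchL (m : ℕ) : fibInf (Phi (m+2) - 2) ≠ fibInf (Phi (m+1) - 2) := by
  induction m with
  | zero => decide
  | succ m ih =>
    have h1 := succ_le_phi m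
    have h2 := succ_le_phi (m+1)
    have pa3 : Phi (m+3) = Phi (m+2) + Phi (m+1) := phi_add (m+1)
    have e1 : Phi (m+3) - 2 = Phi (m+2) + (Phi (m+1) - 2) := by omega
    rw [e1, shiftQ (by omega)]
    exact fun h => ih h.symm

/-- strong shift agreement: for m ≥ 2, shift by Phi m agrees on Phi (m+1) - 2 letters -/
lemma shiftP {m : ℕ} (hm : 2 ≤ m) : ∀ i, i + 3 ≤ Phi (m+1) → fibInf (Phi m + i) = fibInf i := by
  induction m, hm using Nat.le_induction with
  | base =>
    intro i hi
    have h5 : Phi (2+1) = 5 := by decide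
    have : i ≤ 2 := by omega
    interval_cases i <;> decide
  | succ m hm ih =>
    intro i hi
    simp only [show m+1+1 = m+2 from rfl] at hi
    rcases Nat.lt_or_ge i (Phi m) with h|h
    · exact shiftQ h
    · have h1 := succ_le_phi m
      have pa2 : Phi (m+2) = Phi (m+1) + Phi m := phi_add m
      obtain ⟨r, rfl⟩ : ∃ r, i = Phi m + r := ⟨i - Phi m, by omega⟩
      rw [ih r (by omega), show Phi (m+1) + (Phi m + r) = Phi (m+2) + r by omega,
        shiftQ (show r < Phi (m+1) by omega)]

/-- occurrence of the prefix of length `Phi m + 1` at position `q` -/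
def Occ (m q : ℕ) : Prop := ∀ i ≤ Phi m, fibInf (q + i) = fibInf i

/-- key exclusion: the prefix of length `Phi (m+1) + 1` does not occur at `Phi m` -/
lemma occ_ne_phi {m q : ℕ} (hO : Occ (m+1) q) : q ≠ Phi m := by
  intro hq'
  subst hq'
  have h2 := succ_le_phi (m+1)
  have pa1 : Phi (m+2) = Phi (m+1) + Phi m := phi_add m
  have := hO (Phi (m+1) - 2) (by omega)
  rw [show Phi m + (Phi (m+1) - 2) = Phi (m+2) - 2 by omega] at this
  exact mismatchL m this

lemma Ccore : ∀ m, 2 ≤ m → ∀ q, Occ m q → 0 < q → q < Phi (m+2) → q = Phi m ∨ q = Phi (m+1) := by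
  intro m hm
  induction m, hm using Nat.le_induction with
  | base =>
    intro q hOcc hq0 hq
    have h4 : Phi (2+2) = 8 := by decide
    have h2 : Phi 2 = 3 := by decide
    rw [h4] at hq
    interval_cases q
    · exact absurd (hOcc 0 (by omega)) (by decide)
    · exact absurd (hOcc 1 (by omega)) (by decide)
    · left; rw [h2]
    · exact absurd (hOcc 0 (by omega)) (by decide)
    · right; decide
    · exact absurd (hOcc 0 (by omega)) (by decide)
    · exact absurd (hOcc 1 (by omega)) (by decide)
  | succ m hm ih =>
    intro q hOcc hq0 hq
    simp only [show m+1+1 = m+2 from rfl, show m+1+2 = m+3 from rfl] at hOcc hq ⊢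
    have h1 := succ_le_phi m
    have h2 := succ_le_phi (m+1)
    have h3 := succ_le_phi (m+2)
    have pa1 : Phi (m+2) = Phi (m+1) + Phi m := phi_add m
    have pa2 : Phi (m+3) = Phi (m+2) + Phi (m+1) := phi_add (m+1)
    have hmono : Phi m ≤ Phi (m+1) := phi_mono (by omega)
    have hOccm : Occ m q := fun i hi => hOcc i (by omega)
    rcases Nat.lt_or_ge q (Phi (m+2)) with hlt|hge
    · rcases ih q hOccm hq0 hlt with h|h
      · exact absurd h (occ_ne_phi hOcc)
      · left; exact h
    · rcases Nat.eq_or_lt_of_le hge with heq|hgt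
      · right; exact heq.symm
      · exfalso
        have hr1 : 0 < q - Phi (m+2) := by omega
        have hr2 : q - Phi (m+2) < Phi (m+1) := by omega
        have hOccr : Occ m (q - Phi (m+2)) := by
          intro i hi
          have h5 := hOccm i hi
          have pa3 : Phi (m+2+1) = Phi (m+2) + Phi (m+1) := phi_add (m+1)
          rw [show q + i = Phi (m+2) + (q - Phi (m+2) + i) by omega,
            shiftP (by omega) _ (by omega)] at h5
          exact h5
        rcases ih _ hOccr hr1 (by omega) with h|h
        · -- q = Phi (m+2) + Phi m; transfer Occ (m+1) q to Occ (m+1) (Phi m)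
          apply occ_ne_phi (q := Phi m) _ rfl
          intro i hi
          have h5 := hOcc i hi
          have pa3 : Phi (m+2+1) = Phi (m+2) + Phi (m+1) := phi_add (m+1)
          rw [show q + i = Phi (m+2) + (Phi m + i) by omega,
            shiftP (by omega) _ (by omega)] at h5
          exact h5
        · omega


lemma fibPrefix_length (n : ℕ) : (fibPrefix n).length = n := by simp [fibPrefix]

lemma fibPrefix_getElem {n i : ℕ} (h : i < (fibPrefix n).length) :
    (fibPrefix n)[i] = fibInf i := by
  simp [fibPrefix]

lemma take_fibPrefix {j n : ℕ} (h : j ≤ n) : (fibPrefix n).take j = fibPrefix j := by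
  rw [fibPrefix, fibPrefix, ← List.map_take, List.take_range, Nat.min_eq_left h]

lemma border_mk {p j : ℕ} (hagree : ∀ i < j, fibInf (p + i) = fibInf i) :
    (fibPrefix (p+j)).take j <:+ fibPrefix (p+j) := by
  have hlen := fibPrefix_length (p+j)
  have heq : (fibPrefix (p+j)).take j = (fibPrefix (p+j)).drop p := by
    apply List.ext_getElem
    · simp [hlen]
    · intro i h1 h2
      rw [List.getElem_take, List.getElem_drop, fibPrefix_getElem, fibPrefix_getElem]
      · exact (hagree i (by simp [hlen] at h1; omega)).symm
  rw [heq]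
  exact List.drop_suffix _ _

lemma border_elim {p j : ℕ} (h : (fibPrefix (p+j)).take j <:+ fibPrefix (p+j)) :
    ∀ i < j, fibInf (p + i) = fibInf i := by
  intro i hi
  rw [take_fibPrefix (Nat.le_add_left j p)] at h
  obtain ⟨t, ht⟩ := h
  have htl : t.length = p := by
    have := congrArg List.length ht
    simp [fibPrefix_length] at this
    omega
  have e1 := congrArg (fun l => l[p+i]?) ht
  rw [List.getElem?_append_right (by omega), htl, Nat.add_sub_cancel_left,
    List.getElem?_eq_getElem (by rw [fibPrefix_length]; omega),
    List.getElem?_eq_getElem (by rw [fibPrefix_length]; omega),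
    fibPrefix_getElem, fibPrefix_getElem] at e1
  exact (Option.some.inj e1).symm

lemma sb_eq {p j : ℕ} (hpos : 0 < p + j) (hshort : 2 * j < p + j)
    (hagree : ∀ i < j, fibInf (p + i) = fibInf i)
    (hub : ∀ l, (fibPrefix (p+j)).take l <:+ fibPrefix (p+j) → 2 * l < p + j → l ≤ j) :
    shortBordLen (fibPrefix (p+j)) = j := by
  apply IsGreatest.csSup_eq
  constructor
  · exact ⟨border_mk hagree, by rw [fibPrefix_length]; exact hshort⟩
  · rintro l ⟨hsuf, hl⟩
    exact hub l hsuf (by rwa [fibPrefix_length] at hl)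

/-- Equation (2): the longest short border of the prefix `F_∞[1..n]`, for
`Φ_k ≤ n ≤ Φ_{k+1} − 1`, `k ≥ 4`, by cases on the position of `n` in the range. -/
theorem shortBordLen_fibPrefix (k : ℕ) (hk : 4 ≤ k) (n : ℕ)
    (h1 : Phi k ≤ n) (h2 : n ≤ Phi (k + 1) - 1) :
    (∀ j, j < Phi (k - 3) → n = Phi k + j →
        shortBordLen (fibPrefix n) = Phi (k - 2) + j) ∧
    (∀ j, j < Phi (k - 4) → n = Phi k + Phi (k - 3) + j →
        shortBordLen (fibPrefix n) = Phi (k - 3) + j) ∧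
    (∀ j, j < Phi (k - 3) → n = Phi k + Phi (k - 2) + j →
        shortBordLen (fibPrefix n) = Phi (k - 2) + j) := by
  clear h1 h2
  obtain ⟨m, rfl⟩ : ∃ m, k = m + 4 := ⟨k - 4, by omega⟩
  simp only [show m + 4 - 3 = m + 1 from rfl, show m + 4 - 2 = m + 2 from rfl,
    show m + 4 - 4 = m from rfl]
  have s0 := succ_le_phi m
  have s1 := succ_le_phi (m+1)
  have s2 := succ_le_phi (m+2)
  have s3 := succ_le_phi (m+3)
  have pa0 : Phi (m+2) = Phi (m+1) + Phi m := phi_add m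
  have pa1 : Phi (m+3) = Phi (m+2) + Phi (m+1) := phi_add (m+1)
  have pa2 : Phi (m+4) = Phi (m+3) + Phi (m+2) := phi_add (m+2)
  have pa3 : Phi (m+5) = Phi (m+4) + Phi (m+3) := phi_add (m+3)
  refine ⟨?_, ?_, ?_⟩
  · -- Case 1: n = Phi (m+4) + j, j < Phi (m+1)
    intro j hj hn
    subst hn
    rw [show Phi (m+4) + j = Phi (m+3) + (Phi (m+2) + j) by omega]
    apply sb_eq (by omega) (by omega)
    · intro i hi
      exact shiftP (by omega) i (by have n1 : Phi (m+3+1) = Phi (m+4) := rfl; omega)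
    · intro l hsuf hl
      by_contra hgt
      push_neg at hgt
      rw [show Phi (m+3) + (Phi (m+2) + j) =
        (Phi (m+3) + (Phi (m+2) + j) - l) + l by omega] at hsuf
      have hagree := border_elim hsuf
      set p' := Phi (m+3) + (Phi (m+2) + j) - l with hp'
      have hOcc : Occ (m+2) p' := fun i hi => hagree i (by omega)
      have n1 : Phi (m+2+1) = Phi (m+3) := rfl
      have n2 : Phi (m+2+2) = Phi (m+4) := rfl
      rcases Ccore (m+2) (by omega) p' hOcc (by omega) (by omega) with h|h <;> omega
  · -- Case 2: n = Phi (m+4) + Phi (m+1) + j, j < Phi m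
    intro j hj hn
    subst hn
    rw [show Phi (m+4) + Phi (m+1) + j = Phi (m+4) + (Phi (m+1) + j) by omega]
    apply sb_eq (by omega) (by omega)
    · intro i hi
      exact shiftP (by omega) i (by have n1 : Phi (m+4+1) = Phi (m+5) := rfl; omega)
    · intro l hsuf hl
      by_contra hgt
      push_neg at hgt
      rw [show Phi (m+4) + (Phi (m+1) + j) =
        (Phi (m+4) + (Phi (m+1) + j) - l) + l by omega] at hsuf
      have hagree := border_elim hsuf
      set p' := Phi (m+4) + (Phi (m+1) + j) - l with hp'
      have hgtd : Phi (m+3) < p' := by omega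
      have hltd : p' < Phi (m+4) := by omega
      match m, hj, hagree, hgtd, hltd, hp' with
      | 0, hj, hagree, hgtd, hltd, hp' =>
        -- small case k = 4 : n = 10
        have hj0 : j = 0 := by have e0 : Phi 0 = 1 := rfl; omega
        subst hj0
        have e4 : Phi (0+4) = 8 := by decide
        have e1 : Phi (0+1) = 2 := by decide
        have hl34 : l = 3 ∨ l = 4 := by omega
        rcases hl34 with rfl|rfl <;>
          exact absurd (hagree 1 (by omega)) (by rw [hp']; decide)
      | m'+1, hj, hagree, hgtd, hltd, hp' =>
        set m := m' + 1
        -- transfer to an occurrence at r = p' - Phi (m+3)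
        have hr2 : p' - Phi (m+3) < Phi (m+2) := by omega
        have hOccr : Occ (m+1) (p' - Phi (m+3)) := by
          intro i hi
          have h5 := hagree i (by omega)
          rw [show p' + i = Phi (m+3) + (p' - Phi (m+3) + i) by omega,
            shiftP (by omega) _ (by have n1 : Phi (m+3+1) = Phi (m+4) := rfl; omega)] at h5
          exact h5
        have n1 : Phi (m+1+1) = Phi (m+2) := rfl
        have n2 : Phi (m+1+2) = Phi (m+3) := rfl
        have hreq : p' - Phi (m+3) = Phi (m+1) := by
          rcases Ccore (m+1) (by omega) _ hOccr (by omega) (by omega) with h|h <;> omega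
        -- now p' = Phi (m+3) + Phi (m+1); exhibit the mismatch at i₀ = Phi (m+2) - 2
        have h5 := hagree (Phi (m+2) - 2) (by omega)
        rw [show p' + (Phi (m+2) - 2) = Phi (m+3) + (Phi (m+3) - 2) by omega,
          shiftP (by omega) _ (by have n3 : Phi (m+3+1) = Phi (m+4) := rfl; omega)] at h5
        exact absurd h5 (mismatchL (m+1))
  · -- Case 3: n = Phi (m+4) + Phi (m+2) + j, j < Phi (m+1)
    intro j hj hn
    subst hn
    rw [show Phi (m+4) + Phi (m+2) + j = Phi (m+4) + (Phi (m+2) + j) by omega]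
    apply sb_eq (by omega) (by omega)
    · intro i hi
      exact shiftP (by omega) i (by have n1 : Phi (m+4+1) = Phi (m+5) := rfl; omega)
    · intro l hsuf hl
      by_contra hgt
      push_neg at hgt
      rw [show Phi (m+4) + (Phi (m+2) + j) =
        (Phi (m+4) + (Phi (m+2) + j) - l) + l by omega] at hsuf
      have hagree := border_elim hsuf
      set p' := Phi (m+4) + (Phi (m+2) + j) - l with hp'
      have hOcc : Occ (m+2) p' := fun i hi => hagree i (by omega)
      have n1 : Phi (m+2+1) = Phi (m+3) := rfl
      have n2 : Phi (m+2+2) = Phi (m+4) := rfl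
      rcases Ccore (m+2) (by omega) p' hOcc (by omega) (by omega) with h|h <;> omega
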